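/- Let F be C¹ strictly convex on a convex open set U ⊆ ℝ^d, let P satisfy ∫(|ξ| ∨ |F(ξ)|) dP < ∞ with P(U)=1, and let x = (x_1,…,x_n) ∈ U^n be a stationary quantizer: the boundaries of its Bregman–Voronoi cells C_i(x) are P-negligible and x_i = E[X | X ∈ C_i(x)] whenever P(C_i(x)) > 0, where X ∼ P. Let X̂ = Σ_i x_i 1_{C_i(x)}(X). Then E[φ_F(X, X̂)] = E[F(X)] − E[F(X̂)]. -/

import Mathlib

open scoped InnerProductSpace

noncomputable def bregman {d : ℕ} (F : EuclideanSpace ℝ (Fin d) → ℝ)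
    (f : EuclideanSpace ℝ (Fin d) → EuclideanSpace ℝ (Fin d))
    (ξ x : EuclideanSpace ℝ (Fin d)) : ℝ :=
  F ξ - F x - ⟪f x, ξ - x⟫_ℝ

open MeasureTheory in
theorem stmt_13 {d : ℕ} (U : Set (EuclideanSpace ℝ (Fin d)))
    (hUopen : IsOpen U) (hUconv : Convex ℝ U)
    (F : EuclideanSpace ℝ (Fin d) → ℝ)
    (f : EuclideanSpace ℝ (Fin d) → EuclideanSpace ℝ (Fin d))
    (hF : ContDiffOn ℝ 1 F U)
    (hgrad : ∀ x ∈ U, HasGradientAt F (f x) x)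
    (hconv : StrictConvexOn ℝ U F)
    (P : Measure (EuclideanSpace ℝ (Fin d))) [IsProbabilityMeasure P]
    (hPU : P U = 1)
    (hmom : Integrable (fun ξ => ξ) P)
    (hFint : Integrable F P)
    (n : ℕ) (x : Fin n → EuclideanSpace ℝ (Fin d)) (hx : ∀ i, x i ∈ U)
    (C : Fin n → Set (EuclideanSpace ℝ (Fin d)))
    (hCmeas : ∀ i, MeasurableSet (C i))
    (hCdisj : Pairwise (Function.onFun Disjoint C))
    (hCcover : (⋃ i, C i) = U)
    (hCvor : ∀ i, C i ⊆
      {ξ ∈ U | ∀ j, bregman F f ξ (x i) ≤ bregman F f ξ (x j)})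
    (hbound : ∀ i, P (frontier (C i)) = 0)
    (hstat : ∀ i, P (C i) ≠ 0 →
      (P (C i)).toReal • x i = ∫ ξ in C i, ξ ∂P)
    (q : EuclideanSpace ℝ (Fin d) → EuclideanSpace ℝ (Fin d))
    (hq : ∀ i, ∀ ξ ∈ C i, q ξ = x i) :
    ∫ ξ, bregman F f ξ (q ξ) ∂P = (∫ ξ, F ξ ∂P) - ∫ ξ, F (q ξ) ∂P := by
  classical
  have hUmeas : MeasurableSet (⋃ i, C i) := MeasurableSet.iUnion hCmeas
  have hae : ∀ᵐ ξ ∂P, ξ ∈ ⋃ i, C i := by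
    have hc : P (⋃ i, C i)ᶜ = 0 := by
      rw [measure_compl hUmeas (measure_ne_top _ _), hCcover, hPU, measure_univ]
      simp
    rw [ae_iff]
    rwa [Set.compl_def] at hc
  -- the simple versions
  set ψ : EuclideanSpace ℝ (Fin d) → ℝ :=
    fun ξ => ∑ i, Set.indicator (C i) (fun η => ⟪f (x i), η - x i⟫_ℝ) ξ with hψdef
  set Φ : EuclideanSpace ℝ (Fin d) → ℝ :=
    fun ξ => ∑ i, Set.indicator (C i) (fun _ => F (x i)) ξ with hΦdef
  have hpoint : ∀ ξ ∈ ⋃ i, C i,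
      ψ ξ = ⟪f (q ξ), ξ - q ξ⟫_ℝ ∧ Φ ξ = F (q ξ) := by
    intro ξ hξ
    obtain ⟨i, hi⟩ := Set.mem_iUnion.mp hξ
    have hqξ : q ξ = x i := hq i ξ hi
    have hnot : ∀ j, j ≠ i → ξ ∉ C j := by
      intro j hj hmem
      exact Set.disjoint_left.mp (hCdisj hj) hmem hi
    constructor
    · show ∑ j, Set.indicator (C j) (fun η => ⟪f (x j), η - x j⟫_ℝ) ξ = _
      rw [Finset.sum_eq_single i]
      · rw [Set.indicator_of_mem hi, hqξ]
      · intro j _ hj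
        exact Set.indicator_of_notMem (hnot j hj) _
      · simp
    · show ∑ j, Set.indicator (C j) (fun _ => F (x j)) ξ = _
      rw [Finset.sum_eq_single i]
      · rw [Set.indicator_of_mem hi, hqξ]
      · intro j _ hj
        exact Set.indicator_of_notMem (hnot j hj) _
      · simp
  have hψint : Integrable ψ P := by
    apply integrable_finset_sum
    intro i _
    exact (((hmom.sub (integrable_const (x i))).const_inner (f (x i))).indicator (hCmeas i))
  have hΦint : Integrable Φ P := by
    apply integrable_finset_sum
    intro i _
    exact (integrable_const (F (x i))).indicator (hCmeas i)
  have haeψ : ψ =ᵐ[P] fun ξ => ⟪f (q ξ), ξ - q ξ⟫_ℝ :=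
    hae.mono fun ξ h => (hpoint ξ h).1
  have haeΦ : Φ =ᵐ[P] fun ξ => F (q ξ) :=
    hae.mono fun ξ h => (hpoint ξ h).2
  have hginl : Integrable (fun ξ => ⟪f (q ξ), ξ - q ξ⟫_ℝ) P := hψint.congr haeψ
  have hFq : Integrable (fun ξ => F (q ξ)) P := hΦint.congr haeΦ
  -- the inner product term integrates to zero
  have hcell : ∀ i, ∫ ξ in C i, ⟪f (x i), ξ - x i⟫_ℝ ∂P = 0 := by
    intro i
    by_cases h : P (C i) = 0
    · rw [Measure.restrict_eq_zero.mpr h, integral_zero_measure]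
    · have hint : IntegrableOn (fun ξ => ξ - x i) (C i) P :=
        (hmom.sub (integrable_const (x i))).integrableOn
      rw [integral_inner hint]
      have : ∫ ξ in C i, (ξ - x i) ∂P = 0 := by
        rw [integral_sub hmom.integrableOn ((integrableOn_const_iff).mpr (Or.inr
          (lt_of_le_of_lt (measure_mono (Set.subset_univ _)) (by simp [measure_univ]))))]
        rw [setIntegral_const, ← hstat i h, measureReal_def, sub_self]
      rw [this, inner_zero_right]
  have hg0 : ∫ ξ, ⟪f (q ξ), ξ - q ξ⟫_ℝ ∂P = 0 := by
    rw [← integral_congr_ae haeψ]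
    have : ∫ ξ, ψ ξ ∂P = ∑ i, ∫ ξ, Set.indicator (C i) (fun η => ⟪f (x i), η - x i⟫_ℝ) ξ ∂P := by
      apply integral_finset_sum
      intro i _
      exact (((hmom.sub (integrable_const (x i))).const_inner (f (x i))).indicator (hCmeas i))
    rw [this]
    rw [Finset.sum_eq_zero]
    intro i _
    rw [integral_indicator (hCmeas i)]
    exact hcell i
  have h1 : Integrable (fun ξ => F ξ - F (q ξ)) P := hFint.sub hFq
  simp only [bregman]
  rw [integral_sub h1 hginl, integral_sub hFint hFq, hg0, sub_zero]
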